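/- Let k be a field of characteristic 2 and let δ be the k-derivation of k[x,y] with δ(x) = x y² and δ(y) = x² + y³. Then k[x², y², x³ + x y³] is contained in the ring of constants of δ, and k[x², y², x³ + x y³] is isomorphic as a k-algebra to k[X,Y,Z]/(Z² + X³ + X Y³) via X ↦ x², Y ↦ y², Z ↦ x³ + x y³. -/

import Mathlib

open MvPolynomial

section Aux


variable {k : Type*} [Field k] [CharP k 2]

private theorem two_eq_zero' {n : ℕ} : (2 : MvPolynomial (Fin n) k) = 0 := by
  exact_mod_cast CharP.cast_eq_zero (MvPolynomial (Fin n) k) 2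

omit [CharP k 2] in
private theorem expand_monomial2 (d : Fin 2 →₀ ℕ) (r : k) :
    expand 2 (monomial d r) = monomial (2 • d) r := by
  rw [expand_monomial, monomial_eq, Finsupp.prod,
    Finsupp.support_smul_eq (by norm_num : (2:ℕ) ≠ 0)]

private theorem smul2_inj (s d : Fin 2 →₀ ℕ) (h : 2 • s = 2 • d) : s = d :=
  Finsupp.ext fun i => Nat.eq_of_mul_eq_mul_left two_pos
    (by simpa [Finsupp.smul_apply] using DFunLike.congr_fun h i)

omit [CharP k 2] in
private theorem coeff_expand2 (s : Fin 2 →₀ ℕ) (f : MvPolynomial (Fin 2) k) :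
    coeff (2 • s) (expand 2 f) = coeff s f := by
  induction f using MvPolynomial.induction_on' with
  | monomial d r =>
    rw [expand_monomial2]
    simp only [coeff_monomial]
    by_cases h : d = s
    · simp [h]
    · rw [if_neg (fun hh => h (smul2_inj _ _ hh.symm).symm), if_neg h]
  | add p q hp hq => simp [hp, hq]

omit [CharP k 2] in
private theorem expand2_inj {f : MvPolynomial (Fin 2) k}
    (h : expand 2 f = 0) : f = 0 := by
  ext s
  have := congrArg (coeff (2 • s)) h
  rw [coeff_expand2] at this
  simpa using this

private theorem pderiv_expand2 (i : Fin 2) (f : MvPolynomial (Fin 2) k) :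
    pderiv i (expand 2 f) = 0 := by
  induction f using MvPolynomial.induction_on with
  | C a => simp
  | add p q hp hq => simp [hp, hq]
  | mul_X p j hp =>
    rw [map_mul, expand_X, pderiv_mul, hp, pderiv_pow, Nat.cast_ofNat, two_eq_zero']
    ring

private theorem pderiv0_key :
    pderiv (0 : Fin 2) ((X 0 : MvPolynomial (Fin 2) k) ^ 3 + X 0 * X 1 ^ 3)
    = X 0 ^ 2 + X 1 ^ 3 := by
  have h2 : (2 : MvPolynomial (Fin 2) k) = 0 := two_eq_zero'
  simp [pderiv_pow, pderiv_mul, pderiv_X, Pi.single_apply]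
  linear_combination h2

private theorem decomp (f : MvPolynomial (Fin 3) k) :
    ∃ a b : MvPolynomial (Fin 2) k,
      f - (rename Fin.castSucc a + rename Fin.castSucc b * X 2) ∈
        Ideal.span {(X 2 ^ 2 + X 0 ^ 3 + X 0 * X 1 ^ 3 : MvPolynomial (Fin 3) k)} := by
  have h2 : (2 : MvPolynomial (Fin 3) k) = 0 := two_eq_zero'
  induction f using MvPolynomial.induction_on with
  | C c =>
    refine ⟨C c, 0, ?_⟩
    simp [rename_C]
  | add p q hp hq =>
    obtain ⟨a, b, hab⟩ := hp
    obtain ⟨a', b', hab'⟩ := hq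
    refine ⟨a + a', b + b', ?_⟩
    have h : p + q - (rename Fin.castSucc (a + a') + rename Fin.castSucc (b + b') * X 2)
        = (p - (rename Fin.castSucc a + rename Fin.castSucc b * X 2))
          + (q - (rename Fin.castSucc a' + rename Fin.castSucc b' * X 2)) := by
      simp only [map_add]; ring
    rw [h]
    exact Ideal.add_mem _ hab hab'
  | mul_X p i hp =>
    obtain ⟨a, b, hab⟩ := hp
    fin_cases i
    · refine ⟨a * X 0, b * X 0, ?_⟩
      show p * X 0 - (rename Fin.castSucc (a * X 0) + rename Fin.castSucc (b * X 0) * X 2)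
          ∈ Ideal.span {(X 2 ^ 2 + X 0 ^ 3 + X 0 * X 1 ^ 3 : MvPolynomial (Fin 3) k)}
      have h : p * X 0 - (rename Fin.castSucc (a * X 0) + rename Fin.castSucc (b * X 0) * X 2)
          = (p - (rename Fin.castSucc a + rename Fin.castSucc b * X 2)) * X 0 := by
        simp only [map_mul, rename_X]
        have e0 : (Fin.castSucc (0 : Fin 2)) = (0 : Fin 3) := rfl
        rw [e0]; ring
      rw [h]
      exact Ideal.mul_mem_right _ _ hab
    · refine ⟨a * X 1, b * X 1, ?_⟩
      show p * X 1 - (rename Fin.castSucc (a * X 1) + rename Fin.castSucc (b * X 1) * X 2)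
          ∈ Ideal.span {(X 2 ^ 2 + X 0 ^ 3 + X 0 * X 1 ^ 3 : MvPolynomial (Fin 3) k)}
      have h : p * X 1 - (rename Fin.castSucc (a * X 1) + rename Fin.castSucc (b * X 1) * X 2)
          = (p - (rename Fin.castSucc a + rename Fin.castSucc b * X 2)) * X 1 := by
        simp only [map_mul, rename_X]
        have e1 : (Fin.castSucc (1 : Fin 2)) = (1 : Fin 3) := rfl
        rw [e1]; ring
      rw [h]
      exact Ideal.mul_mem_right _ _ hab
    · refine ⟨b * (X 0 ^ 3 + X 0 * X 1 ^ 3), a, ?_⟩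
      show p * X 2 - (rename Fin.castSucc (b * (X 0 ^ 3 + X 0 * X 1 ^ 3))
            + rename Fin.castSucc a * X 2)
          ∈ Ideal.span {(X 2 ^ 2 + X 0 ^ 3 + X 0 * X 1 ^ 3 : MvPolynomial (Fin 3) k)}
      have key : p * X 2 - (rename Fin.castSucc (b * (X 0 ^ 3 + X 0 * X 1 ^ 3))
            + rename Fin.castSucc a * X 2)
          = (p - (rename Fin.castSucc a + rename Fin.castSucc b * X 2)) * X 2
            + rename Fin.castSucc b * (X 2 ^ 2 + X 0 ^ 3 + X 0 * X 1 ^ 3)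
            - 2 * (rename Fin.castSucc b * (X 0 ^ 3 + X 0 * X 1 ^ 3)) := by
        simp only [map_mul, map_add, rename_X, map_pow]
        have e0 : (Fin.castSucc (0 : Fin 2)) = (0 : Fin 3) := rfl
        have e1 : (Fin.castSucc (1 : Fin 2)) = (1 : Fin 3) := rfl
        rw [e0, e1]; ring
      rw [key, h2]
      simp only [zero_mul, sub_zero]
      exact Ideal.add_mem _ (Ideal.mul_mem_right _ _ hab)
        (Ideal.mul_mem_left _ _ (Ideal.subset_span rfl))

end Aux

/-- In characteristic 2, for the derivation `δ` of `k[x,y]` with `δ x = x y²`,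
`δ y = x² + y³`, the subalgebra `k[x², y², x³ + x y³]` is contained in the ring of
constants of `δ`, and it is isomorphic to `k[X,Y,Z]/(Z² + X³ + X Y³)` via `X ↦ x²`,
`Y ↦ y²`, `Z ↦ x³ + x y³` (formalized by saying the evaluation map has kernel
`(Z² + X³ + X Y³)` and range `k[x², y², x³ + x y³]`). -/
theorem stmt4 (k : Type*) [Field k] [CharP k 2]
    (δ : Derivation k (MvPolynomial (Fin 2) k) (MvPolynomial (Fin 2) k))
    (hx : δ (X 0) = X 0 * X 1 ^ 2) (hy : δ (X 1) = X 0 ^ 2 + X 1 ^ 3)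
    (φ : MvPolynomial (Fin 3) k →ₐ[k] MvPolynomial (Fin 2) k)
    (hφ : φ = aeval ![X 0 ^ 2, X 1 ^ 2, X 0 ^ 3 + X 0 * X 1 ^ 3]) :
    (∀ f ∈ Algebra.adjoin k
        {(X 0 ^ 2 : MvPolynomial (Fin 2) k), X 1 ^ 2, X 0 ^ 3 + X 0 * X 1 ^ 3}, δ f = 0) ∧
    φ.range = Algebra.adjoin k
        {(X 0 ^ 2 : MvPolynomial (Fin 2) k), X 1 ^ 2, X 0 ^ 3 + X 0 * X 1 ^ 3} ∧
    RingHom.ker φ.toRingHom =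
      Ideal.span {X 2 ^ 2 + X 0 ^ 3 + X 0 * X 1 ^ 3} := by
  have h2 : (2 : MvPolynomial (Fin 2) k) = 0 := two_eq_zero'
  have hA : δ ((X 0 : MvPolynomial (Fin 2) k) ^ 2) = 0 := by
    rw [sq, Derivation.leibniz, smul_eq_mul]
    linear_combination (X 0 * δ (X 0) : MvPolynomial (Fin 2) k) * h2
  have hB : δ ((X 1 : MvPolynomial (Fin 2) k) ^ 2) = 0 := by
    rw [sq, Derivation.leibniz, smul_eq_mul]
    linear_combination (X 1 * δ (X 1) : MvPolynomial (Fin 2) k) * h2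
  have hC : δ ((X 0 : MvPolynomial (Fin 2) k) ^ 3 + X 0 * X 1 ^ 3) = 0 := by
    have e1 : (X 0 : MvPolynomial (Fin 2) k) ^ 3 = X 0 * X 0 * X 0 := by ring
    have e2 : (X 0 : MvPolynomial (Fin 2) k) * X 1 ^ 3 = X 0 * (X 1 * (X 1 * X 1)) := by ring
    rw [e1, e2, map_add]
    simp only [Derivation.leibniz, smul_eq_mul, hx, hy]
    linear_combination ((3 : MvPolynomial (Fin 2) k) * X 0 ^ 3 * X 1 ^ 2 + 2 * X 0 * X 1 ^ 5) * h2
  refine ⟨?_, ?_, ?_⟩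
  · intro f hf
    induction hf using Algebra.adjoin_induction with
    | mem x hx' =>
      rcases hx' with h | h | h
      · rw [h]; exact hA
      · rw [h]; exact hB
      · rw [h]; exact hC
    | algebraMap r => simp [Derivation.map_algebraMap]
    | add x y _ _ hx' hy' => simp [hx', hy']
    | mul x y _ _ hx' hy' => simp [Derivation.leibniz, hx', hy']
  · subst hφ
    rw [← Algebra.adjoin_range_eq_range_aeval]
    congr 1
    ext g
    simp only [Matrix.range_cons, Matrix.range_empty, Set.union_empty, Set.union_singleton,
      Set.mem_insert_iff, Set.mem_singleton_iff, Set.mem_union]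
    tauto
  · have hφp : φ (X 2 ^ 2 + X 0 ^ 3 + X 0 * X 1 ^ 3) = 0 := by
      rw [hφ]
      simp only [map_add, map_mul, map_pow, aeval_X]
      show ((X 0:MvPolynomial (Fin 2) k) ^ 3 + X 0 * X 1 ^ 3) ^ 2 + (X 0 ^ 2) ^ 3
          + X 0 ^ 2 * (X 1 ^ 2) ^ 3 = 0
      linear_combination ((X 0:MvPolynomial (Fin 2) k) ^ 6 + X 0 ^ 4 * X 1 ^ 3
        + X 0 ^ 2 * X 1 ^ 6) * h2
    have hφz : φ (X 2) = X 0 ^ 3 + X 0 * X 1 ^ 3 := by rw [hφ]; simp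
    have hcomp : ∀ g : MvPolynomial (Fin 2) k, φ (rename Fin.castSucc g) = expand 2 g := by
      intro g
      rw [hφ, aeval_rename]
      have h : (aeval ((![X 0 ^ 2, X 1 ^ 2, X 0 ^ 3 + X 0 * X 1 ^ 3] :
            Fin 3 → MvPolynomial (Fin 2) k) ∘ Fin.castSucc) :
            MvPolynomial (Fin 2) k →ₐ[k] MvPolynomial (Fin 2) k) = expand 2 := by
        apply MvPolynomial.algHom_ext
        intro i
        fin_cases i <;> simp [expand_X]
      exact DFunLike.congr_fun h g
    apply le_antisymm
    · intro f hf
      rw [RingHom.mem_ker] at hf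
      have hf0 : φ f = 0 := hf
      obtain ⟨a, b, hab⟩ := decomp f
      rw [Ideal.mem_span_singleton] at hab
      obtain ⟨c, hc⟩ := hab
      have h0 : expand 2 a + expand 2 b * (X 0 ^ 3 + X 0 * X 1 ^ 3) = 0 := by
        have hfe : f = rename Fin.castSucc a + rename Fin.castSucc b * X 2
            + (X 2 ^ 2 + X 0 ^ 3 + X 0 * X 1 ^ 3) * c := by linear_combination hc
        have := congrArg φ hfe
        rw [hf0, map_add, map_add, map_mul, map_mul, hcomp, hcomp, hφp, hφz, zero_mul,
          add_zero] at this
        exact this.symm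
      have hb0 : expand 2 b * ((X 0 : MvPolynomial (Fin 2) k) ^ 2 + X 1 ^ 3) = 0 := by
        have hd := congrArg (pderiv (0 : Fin 2)) h0
        rw [map_add, pderiv_mul, pderiv_expand2, pderiv_expand2, pderiv0_key, map_zero,
          zero_mul, zero_add, zero_add] at hd
        exact hd
      have hne : ((X 0 : MvPolynomial (Fin 2) k) ^ 2 + X 1 ^ 3) ≠ 0 := by
        intro h
        have := congrArg (coeff (Finsupp.single 1 3)) h
        simp [coeff_X_pow, Finsupp.single_eq_single_iff] at this
      have hb : b = 0 := expand2_inj ((mul_eq_zero.1 hb0).resolve_right hne)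
      have ha : a = 0 := expand2_inj (by
        rw [hb, map_zero, zero_mul, add_zero] at h0; exact h0)
      rw [Ideal.mem_span_singleton]
      refine ⟨c, ?_⟩
      rw [ha, hb] at hc
      simpa using hc
    · rw [Ideal.span_le, Set.singleton_subset_iff]
      exact hφp
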